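/- For integers k ≥ 4 and 0 ≤ j ≤ k-4 (so that k - j ≥ 4), one has |b_{k-j}/(k+1) + b_{k-1-j}/k| ≤ 2/((k+1)(k-j)²) + ζ(2)/(2^{k-j}(k+1)) + ζ(2)/(k(k+1)), where b_k = (-1)^{k+1}(1 - 2^{-k})ζ(k+1). -/

import Mathlib

open Filter Topology Finset

/-- Riemann zeta at integer arguments: ζ(k) = ∑_{n=1}^∞ 1/n^k. -/
noncomputable def zeta (k : ℕ) : ℝ := ∑' n : ℕ, 1 / (n + 1 : ℝ) ^ k

/-- b_k = (-1)^{k+1} (1 - 2^{-k}) ζ(k+1). -/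
noncomputable def b (k : ℕ) : ℝ := (-1) ^ (k + 1) * (1 - (2 : ℝ) ^ (-(k : ℤ))) * zeta (k + 1)



lemma zsummable {m : ℕ} (hm : 2 ≤ m) (c : ℕ) :
    Summable (fun n : ℕ => 1 / ((n : ℝ) + c) ^ m) := by
  have h := Real.summable_one_div_nat_pow.2 (by omega : 1 < m)
  exact ((summable_nat_add_iff c).2 h).congr (fun n => by push_cast; ring)

lemma zsummable1 {m : ℕ} (hm : 2 ≤ m) : Summable (fun n : ℕ => 1 / ((n:ℝ) + 1) ^ m) := by
  simpa using zsummable hm 1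

lemma zsummable2 {m : ℕ} (hm : 2 ≤ m) : Summable (fun n : ℕ => 1 / ((n:ℝ) + 2) ^ m) := by
  simpa using zsummable hm 2

lemma zsummable3 {m : ℕ} (hm : 2 ≤ m) : Summable (fun n : ℕ => 1 / ((n:ℝ) + 3) ^ m) := by
  simpa using zsummable hm 3

lemma zeta_nonneg (m : ℕ) : 0 ≤ zeta m := tsum_nonneg (fun n => by positivity)

lemma zeta_le_zeta {m p : ℕ} (hm : 2 ≤ m) (hmp : m ≤ p) : zeta p ≤ zeta m := by
  apply Summable.tsum_le_tsum _ (zsummable1 (le_trans hm hmp)) (zsummable1 hm)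
  intro n
  apply one_div_le_one_div_of_le (by positivity)
  have h0 : (0:ℝ) ≤ (n:ℝ) := Nat.cast_nonneg n
  exact pow_le_pow_right₀ (by linarith) hmp

lemma zeta_eq_one_add {m : ℕ} (hm : 2 ≤ m) :
    zeta m = 1 + ∑' n : ℕ, 1 / ((n:ℝ) + 2) ^ m := by
  rw [zeta, Summable.tsum_eq_zero_add (zsummable1 hm)]
  norm_num
  exact tsum_congr (fun n => by push_cast; ring_nf)


lemma one_le_zeta {m : ℕ} (hm : 2 ≤ m) : 1 ≤ zeta m := by
  rw [zeta_eq_one_add hm]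
  have : 0 ≤ ∑' n : ℕ, 1 / ((n:ℝ) + 2) ^ m := tsum_nonneg (fun n => by positivity)
  linarith

lemma nat_sq_le_two_pow {m : ℕ} (hm : 4 ≤ m) : m ^ 2 ≤ 2 ^ m := by
  induction m, hm using Nat.le_induction with
  | base => norm_num
  | succ m hm ih =>
    have : 2 * m + 1 ≤ m ^ 2 := by nlinarith
    calc (m + 1) ^ 2 = m ^ 2 + (2 * m + 1) := by ring
    _ ≤ 2 ^ m + 2 ^ m := by omega
    _ = 2 ^ (m + 1) := by ring

lemma nat_sq_le_two_mul_three_pow {m : ℕ} (hm : 4 ≤ m) : m ^ 2 ≤ 2 * 3 ^ (m - 2) := by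
  induction m, hm using Nat.le_induction with
  | base => norm_num
  | succ m hm ih =>
    have e : m + 1 - 2 = (m - 2) + 1 := by omega
    rw [e]
    have h3 : 2 * 3 ^ ((m - 2) + 1) = 3 * (2 * 3 ^ (m - 2)) := by ring
    rw [h3]
    nlinarith

lemma telescope_hasSum (a : ℝ) (ha : 0 < a) :
    HasSum (fun n : ℕ => 1 / (((n : ℝ) + a) * ((n : ℝ) + a + 1))) (1 / a) := by
  have hnn : ∀ n : ℕ, 0 ≤ 1 / (((n : ℝ) + a) * ((n : ℝ) + a + 1)) := by
    intro n; positivity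
  rw [hasSum_iff_tendsto_nat_of_nonneg hnn]
  have key : ∀ N : ℕ, ∑ i ∈ range N, 1 / (((i : ℝ) + a) * ((i : ℝ) + a + 1))
      = 1 / a - 1 / ((N : ℝ) + a) := by
    intro N
    have h : ∀ i ∈ range N, 1 / (((i : ℝ) + a) * ((i : ℝ) + a + 1)) =
        (fun n : ℕ => 1 / ((n : ℝ) + a)) i - (fun n : ℕ => 1 / ((n : ℝ) + a)) (i + 1) := by
      intro i _
      have h1 : (0:ℝ) < (i : ℝ) + a := by positivity
      have h2 : (0:ℝ) < (i : ℝ) + a + 1 := by positivity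
      push_cast
      rw [div_sub_div _ _ h1.ne' (by positivity : (0:ℝ) < (i:ℝ) + 1 + a).ne']
      rw [div_eq_div_iff (by positivity) (by positivity)]
      ring
    rw [Finset.sum_congr rfl h, Finset.sum_range_sub']
    norm_num
  simp only [key]
  have h3 : Tendsto (fun N : ℕ => (N : ℝ) + a) atTop atTop :=
    tendsto_atTop_add_const_right atTop a tendsto_natCast_atTop_atTop
  have h2 : Tendsto (fun N : ℕ => 1 / ((N : ℝ) + a)) atTop (𝓝 0) := by
    have h4 := h3.inv_tendsto_atTop; simp only [one_div]; exact h4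
  simpa using tendsto_const_nhds.sub h2

lemma tail3_sq_le : ∑' n : ℕ, 1 / ((n:ℝ) + 3) ^ 2 ≤ 1 / 2 := by
  have ht := telescope_hasSum 2 (by norm_num)
  rw [← ht.tsum_eq]
  apply Summable.tsum_le_tsum _ _ ht.summable
  · intro n
    apply one_div_le_one_div_of_le (by positivity)
    have h0 : (0:ℝ) ≤ (n:ℝ) := Nat.cast_nonneg n
    nlinarith
  · have h := Real.summable_one_div_nat_pow.2 (by norm_num : 1 < 2)
    exact ((summable_nat_add_iff 3).2 h).congr (fun n => by push_cast; ring)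

lemma zeta_sub_le {m : ℕ} (hm : 4 ≤ m) : zeta m - zeta (m+1) ≤ 2 / (m:ℝ)^2 := by
  have hm2 : 2 ≤ m := by omega
  have h1 : 1 ≤ zeta (m+1) := one_le_zeta (by omega)
  have tail_eq : zeta m = 1 + ∑' n:ℕ, 1/((n:ℝ)+2)^m := zeta_eq_one_add hm2
  have hsplit : ∑' n:ℕ, 1/((n:ℝ)+2)^m = 1/2^m + ∑' n:ℕ, 1/((n:ℝ)+3)^m := by
    rw [Summable.tsum_eq_zero_add (zsummable2 hm2)]
    norm_num
    exact tsum_congr (fun n => by push_cast; ring_nf)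
  have htail3 : ∑' n:ℕ, 1/((n:ℝ)+3)^m ≤ (1/(3:ℝ)^(m-2)) * (1/2) := by
    have step : ∑' n:ℕ, 1/((n:ℝ)+3)^m ≤ ∑' n:ℕ, (1/(3:ℝ)^(m-2)) * (1/((n:ℝ)+3)^2) := by
      apply Summable.tsum_le_tsum _ (zsummable3 hm2) (Summable.mul_left _ (zsummable3 (le_refl 2)))
      intro n
      have hx : (3:ℝ) ≤ (n:ℝ)+3 := by have := Nat.cast_nonneg (α:=ℝ) n; linarith
      have hxp : (0:ℝ) < (n:ℝ)+3 := by linarith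
      have hpow : (3:ℝ)^(m-2) * ((n:ℝ)+3)^2 ≤ ((n:ℝ)+3)^m := by
        have e : ((n:ℝ)+3)^m = ((n:ℝ)+3)^(m-2) * ((n:ℝ)+3)^2 := by
          rw [← pow_add]; congr 1; omega
        rw [e]
        have h5 := pow_le_pow_left₀ (by norm_num : (0:ℝ) ≤ 3) hx (m-2)
        nlinarith [pow_pos hxp 2]
      rw [one_div, one_div, one_div, ← mul_inv]
      exact inv_anti₀ (by positivity) hpow
    calc ∑' n:ℕ, 1/((n:ℝ)+3)^m ≤ _ := step
    _ = (1/(3:ℝ)^(m-2)) * ∑' n:ℕ, 1/((n:ℝ)+3)^2 := tsum_mul_left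
    _ ≤ (1/(3:ℝ)^(m-2)) * (1/2) :=
        mul_le_mul_of_nonneg_left tail3_sq_le (by positivity)
  have hnum1 : (1:ℝ)/2^m ≤ 1/(m:ℝ)^2 := by
    apply one_div_le_one_div_of_le
    · have : (4:ℝ) ≤ (m:ℝ) := by exact_mod_cast hm
      nlinarith
    · exact_mod_cast nat_sq_le_two_pow hm
  have hnum2 : (1/(3:ℝ)^(m-2)) * (1/2) ≤ 1/(m:ℝ)^2 := by
    have e : (1/(3:ℝ)^(m-2)) * (1/2) = 1/(2*3^(m-2)) := by ring
    rw [e]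
    apply one_div_le_one_div_of_le
    · have : (4:ℝ) ≤ (m:ℝ) := by exact_mod_cast hm
      nlinarith
    · exact_mod_cast nat_sq_le_two_mul_three_pow hm
  have : 2/(m:ℝ)^2 = 1/(m:ℝ)^2 + 1/(m:ℝ)^2 := by ring
  linarith

lemma two_zeta_sub_le {m : ℕ} (hm : 4 ≤ m) : 2 * zeta m - zeta (m+1) ≤ zeta 2 := by
  have hm2 : 2 ≤ m := by omega
  have hs1 := zsummable1 hm2
  have hs2 := zsummable1 (show 2 ≤ m+1 by omega)
  have key : 2 * zeta m - zeta (m+1)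
      = ∑' n:ℕ, (2 * (1/((n:ℝ)+1)^m) - 1/((n:ℝ)+1)^(m+1)) := by
    rw [Summable.tsum_sub (hs1.mul_left 2) hs2, tsum_mul_left, zeta, zeta]
  rw [key, zeta]
  apply Summable.tsum_le_tsum _ ((hs1.mul_left 2).sub hs2) (zsummable1 (le_refl 2))
  intro n
  rcases n with _ | p
  · norm_num
  · have hx : (2:ℝ) ≤ ((p+1:ℕ):ℝ) + 1 := by
      push_cast; linarith [Nat.cast_nonneg (α:=ℝ) p]
    set x : ℝ := ((p+1:ℕ):ℝ) + 1 with hxdef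
    have hx0 : (0:ℝ) < x := by linarith
    have h1 : 2 / x^m ≤ 1 / x^2 := by
      rw [div_le_div_iff₀ (by positivity) (by positivity)]
      have e : x^m = x^(m-2) * x^2 := by rw [← pow_add]; congr 1; omega
      have h2 : (2:ℝ) ≤ x^(m-2) := by
        calc (2:ℝ) ≤ 2^(m-2) := by
              nth_rewrite 1 [show (2:ℝ) = 2^1 by norm_num]
              exact pow_le_pow_right₀ one_le_two (by omega)
        _ ≤ x^(m-2) := pow_le_pow_left₀ (by norm_num) hx _
      nlinarith [pow_pos hx0 2, pow_pos hx0 (m-2)]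
    have h3 : (0:ℝ) ≤ 1/x^(m+1) := by positivity
    calc 2 * (1/x^m) - 1/x^(m+1) ≤ 2/x^m := by rw [mul_one_div]; linarith
    _ ≤ 1/x^2 := h1

lemma abs_aux (K P M D E B z2 : ℝ) (hK : 0 < K) (hP : 0 < P) (hM : 0 < M)
    (hD0 : 0 ≤ D) (hD : D ≤ 2/M^2) (hE0 : 0 ≤ E) (hE : E ≤ z2)
    (hB0 : 0 ≤ B) (hB : B ≤ z2) (hz : 0 ≤ z2) :
    |(D - P⁻¹*E)/(K+1) + B/(K*(K+1))| ≤ 2/((K+1)*M^2) + z2/(P*(K+1)) + z2/(K*(K+1)) := by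
  have hK1 : (0:ℝ) < K+1 := by linarith
  have hKK : (0:ℝ) < K*(K+1) := by positivity
  have hu0 : (0:ℝ) < P⁻¹ := by positivity
  have huE : 0 ≤ P⁻¹*E := by positivity
  have huE2 : P⁻¹*E ≤ P⁻¹*z2 := mul_le_mul_of_nonneg_left hE hu0.le
  have hM2 : (0:ℝ) < M^2 := by positivity
  have e1 : (2/M^2)/(K+1) = 2/((K+1)*M^2) := by rw [div_div, mul_comm]
  have e2 : (z2*P⁻¹)/(K+1) = z2/(P*(K+1)) := by rw [← div_eq_mul_inv, div_div]
  rw [abs_le]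
  constructor
  · have l1 : -(z2*P⁻¹)/(K+1) ≤ (D - P⁻¹*E)/(K+1) := by
      rw [div_le_div_iff_of_pos_right hK1]; nlinarith
    have l2 : (0:ℝ) ≤ B/(K*(K+1)) := by positivity
    have l3 : (0:ℝ) ≤ 2/((K+1)*M^2) := by positivity
    have l4 : (0:ℝ) ≤ z2/(K*(K+1)) := by positivity
    have l5 : -(z2*P⁻¹)/(K+1) = -(z2/(P*(K+1))) := by rw [neg_div, e2]
    linarith
  · have u1 : (D - P⁻¹*E)/(K+1) ≤ (2/M^2)/(K+1) := by
      rw [div_le_div_iff_of_pos_right hK1]; linarith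
    have u2 : B/(K*(K+1)) ≤ z2/(K*(K+1)) := (div_le_div_iff_of_pos_right hKK).2 hB
    have u3 : (0:ℝ) ≤ z2/(P*(K+1)) := by positivity
    linarith [e1]


theorem b_combination_bound (k j : ℕ) (hk : 4 ≤ k) (hj : j ≤ k - 4) :
    |b (k - j) / ((k : ℝ) + 1) + b (k - 1 - j) / (k : ℝ)| ≤
      2 / (((k : ℝ) + 1) * ((k : ℝ) - (j : ℝ)) ^ 2) +
      zeta 2 / (2 ^ (k - j) * ((k : ℝ) + 1)) +
      zeta 2 / ((k : ℝ) * ((k : ℝ) + 1)) := by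
  set m := k - j with hmdef
  have hm4 : 4 ≤ m := by omega
  have hm2 : 2 ≤ m := by omega
  have hkj : k - 1 - j = m - 1 := by omega
  have hm1 : m - 1 + 1 = m := by omega
  have hKR : (4:ℝ) ≤ (k:ℝ) := by exact_mod_cast hk
  have hK : (0:ℝ) < (k:ℝ) := by linarith
  have hK1 : (0:ℝ) < (k:ℝ) + 1 := by linarith
  have hmR : (4:ℝ) ≤ (m:ℝ) := by exact_mod_cast hm4
  have hjk : (k:ℝ) - (j:ℝ) = (m:ℝ) := by
    have h : m + j = k := by omega
    have h2 : (m:ℝ) + (j:ℝ) = (k:ℝ) := by exact_mod_cast congrArg (Nat.cast : ℕ → ℝ) h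
    linarith
  rw [hkj, hjk]
  have hpw : (0:ℝ) < (2:ℝ)^m := by positivity
  have hu0 : (0:ℝ) < ((2:ℝ)^m)⁻¹ := by positivity
  have hu16 : ((2:ℝ)^m)⁻¹ ≤ 1/16 := by
    rw [show (1:ℝ)/16 = ((16:ℝ))⁻¹ by norm_num]
    apply inv_anti₀ (by norm_num)
    calc (16:ℝ) = 2^4 := by norm_num
    _ ≤ 2^m := pow_le_pow_right₀ one_le_two hm4
  have hu1 : (2:ℝ)^(-(m:ℤ)) = ((2:ℝ)^m)⁻¹ := by rw [zpow_neg, zpow_natCast]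
  have hu2 : (2:ℝ)^(-(((m-1:ℕ)):ℤ)) = 2*((2:ℝ)^m)⁻¹ := by
    have e1 : -(((m-1:ℕ)):ℤ) = 1 + -(m:ℤ) := by omega
    rw [e1, zpow_add₀ (by norm_num : (2:ℝ) ≠ 0), zpow_one, zpow_neg, zpow_natCast]
  have hsign : ((-1:ℝ))^(m+1) = -((-1:ℝ))^m := by rw [pow_succ]; ring
  have hb1 : b m = (-1)^(m+1) * (1 - ((2:ℝ)^m)⁻¹) * zeta (m+1) := by rw [b, hu1]
  have hb2 : b (m-1) = (-1)^m * (1 - 2*((2:ℝ)^m)⁻¹) * zeta m := by rw [b, hm1, hu2]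
  have key : b m / ((k:ℝ)+1) + b (m-1) / (k:ℝ)
      = (-1:ℝ)^m * ((1-2*((2:ℝ)^m)⁻¹) * zeta m / (k:ℝ)
          - (1-((2:ℝ)^m)⁻¹) * zeta (m+1) / ((k:ℝ)+1)) := by
    rw [hb1, hb2, hsign]; ring
  rw [key, abs_mul, abs_pow, abs_neg, abs_one, one_pow, one_mul]
  have hX : (1-2*((2:ℝ)^m)⁻¹) * zeta m / (k:ℝ) - (1-((2:ℝ)^m)⁻¹) * zeta (m+1) / ((k:ℝ)+1)
      = ((zeta m - zeta (m+1)) - ((2:ℝ)^m)⁻¹ * (2 * zeta m - zeta (m+1)))/((k:ℝ)+1)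
        + ((1 - 2*((2:ℝ)^m)⁻¹) * zeta m)/((k:ℝ)*((k:ℝ)+1)) := by
    field_simp
    ring
  rw [hX]
  have hzm : zeta (m+1) ≤ zeta m := zeta_le_zeta hm2 (by omega)
  have hz0 : 0 ≤ zeta m := zeta_nonneg m
  have hz2 : zeta m ≤ zeta 2 := zeta_le_zeta (le_refl 2) hm2
  have hz20 : 0 ≤ zeta 2 := zeta_nonneg 2
  apply abs_aux ((k:ℝ)) ((2:ℝ)^m) ((m:ℝ)) _ _ _ _ hK hpw (by linarith)
    (by linarith) (zeta_sub_le hm4) (by linarith) (two_zeta_sub_le hm4)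
    (mul_nonneg (by linarith) hz0) (by nlinarith [mul_nonneg hu0.le hz0]) hz20
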